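/- arXiv:2601.16820 — 2 statements merged into one kernel-verified Lean document; each statement's English description precedes it below -/
import Mathlib

section
/- For every σ_k > 0, the Fourier coefficients d_n = (1/2π)∫₀^{2π} e^{-inθ}/(σ_k² + cos²θ) dθ satisfy d_n = 0 for odd n, and d_n = 2(-1)^{n/2} e_k |z_in|^{|n|/2} · λ_k²/λ_k² for even n — i.e., with |M(θ)|² = λ_k²(σ_k²+cos²θ), (1/2π)∫₀^{2π} e^{-inθ}|M(θ)|^{-2} dθ = (e_k/λ_k²)·2(-1)^{n/2}|z_in|^{|n|/2} for even n and 0 for odd n, where e_k = ((2σ_k²+1)²-1)^{-1/2} and z_in = -(2σ_k²+1)+√((2σ_k²+1)²-1). -/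
open Real

lemma fourierInt (k : ℤ) :
    (∫ θ in (0:ℝ)..(2*π), Complex.exp (Complex.I * k * θ)) =
      if k = 0 then ((2*π:ℝ):ℂ) else 0 := by
  rcases eq_or_ne k 0 with hk | hk
  · simp [hk]
  · rw [if_neg hk]
    have hc : (Complex.I * (k:ℂ)) ≠ 0 :=
      mul_ne_zero Complex.I_ne_zero (Int.cast_ne_zero.mpr hk)
    rw [show (fun θ:ℝ => Complex.exp (Complex.I * k * θ)) = fun θ:ℝ => Complex.exp ((Complex.I*k) * θ) from rfl,
      integral_exp_mul_complex hc]
    have h1 : Complex.exp (Complex.I * k * ((2*π:ℝ):ℂ)) = 1 := by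
      rw [show Complex.I * k * ((2*π:ℝ):ℂ) = (k:ℂ) * (2*π*Complex.I) by push_cast; ring]
      exact Complex.exp_int_mul_two_pi_mul_I k
    rw [show ((2*π:ℝ):ℂ) = (2*(π:ℝ):ℂ) by push_cast; ring] at h1
    simp [h1]

lemma keySum {a s r : ℝ} (h1 : r^2 + 2*a*r + 1 = 0) (hs : s = a + r) (hr : |r| < 1)
    (ha : 1 < a) (φ : ℝ) :
    HasSum (fun m : ℤ => ((r:ℂ))^m.natAbs * Complex.exp (Complex.I * m * φ))
      ((s:ℂ) / ((a:ℂ) + (Real.cos φ : ℂ))) := by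
  set w := Complex.exp (Complex.I * φ) with hwdef
  have hw : ‖w‖ = 1 := by
    rw [hwdef, mul_comm]; exact Complex.norm_exp_ofReal_mul_I φ
  have hw0 : w ≠ 0 := Complex.exp_ne_zero _
  have hrn : ‖(r:ℂ)‖ < 1 := by simpa [Complex.norm_real] using hr
  have hrw : ‖(r:ℂ) * w‖ < 1 := by
    rw [norm_mul]; simpa [hw] using hrn
  have hrw' : ‖(r:ℂ) * w⁻¹‖ < 1 := by
    rw [norm_mul, norm_inv]; simpa [hw] using hrn
  have h₁ : HasSum (fun j : ℕ => ((r:ℂ) * w) ^ j) (1 - (r:ℂ)*w)⁻¹ :=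
    hasSum_geometric_of_norm_lt_one hrw
  have h₂ : HasSum (fun j : ℕ => ((r:ℂ) * w⁻¹) ^ (j+1))
      (((r:ℂ)*w⁻¹) * (1 - (r:ℂ)*w⁻¹)⁻¹) := by
    simpa [pow_succ, mul_comm] using (hasSum_geometric_of_norm_lt_one hrw').mul_left ((r:ℂ)*w⁻¹)
  have hA : HasSum (fun j : ℕ => ((r:ℂ))^(Int.natAbs (j:ℤ)) * Complex.exp (Complex.I * ((j:ℤ):ℂ) * φ)) (1 - (r:ℂ)*w)⁻¹ := by
    refine h₁.congr_fun fun j => ?_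
    rw [mul_pow, hwdef, ← Complex.exp_nat_mul, Int.natAbs_natCast]
    congr 2
    push_cast; ring
  have hB : HasSum (fun j : ℕ => ((r:ℂ))^(Int.natAbs (-(j+1:ℕ):ℤ)) * Complex.exp (Complex.I * ((-(j+1:ℕ):ℤ):ℂ) * φ)) (((r:ℂ)*w⁻¹) * (1 - (r:ℂ)*w⁻¹)⁻¹) := by
    refine h₂.congr_fun fun j => ?_
    have hna : ((-(j+1:ℕ):ℤ)).natAbs = j+1 := by omega
    rw [hna, mul_pow, inv_pow, hwdef, ← Complex.exp_nat_mul, ← Complex.exp_neg]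
    congr 2
    push_cast; ring
  have hsum : HasSum (fun m : ℤ => ((r:ℂ))^m.natAbs * Complex.exp (Complex.I * m * φ))
      ((1 - (r:ℂ)*w)⁻¹ + ((r:ℂ)*w⁻¹) * (1 - (r:ℂ)*w⁻¹)⁻¹) :=
    HasSum.of_nat_of_neg_add_one hA hB
  have h1w : (1 - (r:ℂ)*w) ≠ 0 := by
    intro h
    have : (r:ℂ)*w = 1 := by linear_combination -h
    rw [this] at hrw; simp at hrw
  have h1w' : (1 - (r:ℂ)*w⁻¹) ≠ 0 := by
    intro h
    have : (r:ℂ)*w⁻¹ = 1 := by linear_combination -h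
    rw [this] at hrw'; simp at hrw'
  have hcos : (Real.cos φ : ℂ) = (w + w⁻¹)/2 := by
    rw [Complex.ofReal_cos, Complex.cos, hwdef, ← Complex.exp_neg]
    ring_nf
  have hdenR : (0:ℝ) < a + Real.cos φ := by nlinarith [Real.neg_one_le_cos φ]
  have hden : ((a:ℂ) + (Real.cos φ : ℂ)) ≠ 0 := by
    intro h
    have h2 : ((a + Real.cos φ : ℝ):ℂ) = 0 := by rw [Complex.ofReal_add]; exact h
    exact absurd (Complex.ofReal_eq_zero.mp h2) (ne_of_gt hdenR)
  have hval : ((s:ℂ) / ((a:ℂ) + (Real.cos φ : ℂ))) =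
      (1 - (r:ℂ)*w)⁻¹ + ((r:ℂ)*w⁻¹) * (1 - (r:ℂ)*w⁻¹)⁻¹ := by
    have h1c : (r:ℂ)^2 + 2*(a:ℂ)*(r:ℂ) + 1 = 0 := by exact_mod_cast congrArg (Complex.ofReal) h1
    have hsc : (s:ℂ) = (a:ℂ) + (r:ℂ) := by exact_mod_cast congrArg (Complex.ofReal) hs
    have hden2 : (a:ℂ) + (w + w⁻¹)/2 ≠ 0 := by rw [← hcos]; exact hden
    rw [hcos, hsc]
    have hwr : w - (r:ℂ) ≠ 0 := by
      have hh : w * (1 - (r:ℂ)*w⁻¹) = w - r := by field_simp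
      rw [← hh]; exact mul_ne_zero hw0 h1w'
    rw [div_eq_iff hden2]
    field_simp [hwr]
    linear_combination (-w - w^3 + 2*(r:ℂ)*w^2) * h1c
  rw [hval]; exact hsum


/-- Fourier coefficients of |M|⁻² with M(θ) = λ_k(σ_k + i cos θ):
    they vanish for odd n and equal (e_k/λ_k²)·2(-1)^{n/2}|z_in|^{|n|/2}
    for even n. -/
theorem stmt10 (lk σk : ℝ) (hl : 0 < lk) (hσ : 0 < σk) (n : ℤ) :
    (Odd n →
      ((1/(2*π) : ℝ) : ℂ) * ∫ θ in (0:ℝ)..(2*π),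
          Complex.exp (-Complex.I * (n : ℂ) * (θ : ℂ)) /
            ((‖(lk : ℂ) * ((σk : ℂ) + Complex.I * (Real.cos θ : ℂ))‖ ^ 2 : ℝ) : ℂ)
        = 0)
    ∧ (Even n →
      ((1/(2*π) : ℝ) : ℂ) * ∫ θ in (0:ℝ)..(2*π),
          Complex.exp (-Complex.I * (n : ℂ) * (θ : ℂ)) /
            ((‖(lk : ℂ) * ((σk : ℂ) + Complex.I * (Real.cos θ : ℂ))‖ ^ 2 : ℝ) : ℂ)
        = ((((Real.sqrt ((2*σk^2 + 1)^2 - 1))⁻¹ / lk^2) * (2 * (-1 : ℝ)^(n/2)) *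
            ((2*σk^2 + 1) - Real.sqrt ((2*σk^2 + 1)^2 - 1)) ^ (n.natAbs / 2) : ℝ) : ℂ)) := by
  set A : ℝ := 2*σk^2 + 1 with hAdef
  set S : ℝ := Real.sqrt (A^2 - 1) with hSdef
  set R : ℝ := S - A with hRdef
  have hA : 1 < A := by nlinarith
  have hA2 : (0:ℝ) ≤ A^2 - 1 := by nlinarith
  have hS2 : S^2 = A^2 - 1 := Real.sq_sqrt hA2
  have hSpos : 0 < S := Real.sqrt_pos.mpr (by nlinarith)
  have hSA : S < A := by nlinarith [Real.sqrt_nonneg (A^2-1)]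
  have hRgt : -1 < R := by
    have : A - 1 < S := by
      rw [hSdef]
      rw [show A^2 - 1 = (A-1)*(A+1) by ring]
      nlinarith [Real.sq_sqrt (show (0:ℝ) ≤ (A-1)*(A+1) by nlinarith),
        Real.sqrt_nonneg ((A-1)*(A+1))]
    simp only [hRdef]; linarith
  have habsR : |R| < 1 := abs_lt.mpr ⟨hRgt, by simp only [hRdef]; linarith⟩
  have h1R : R^2 + 2*A*R + 1 = 0 := by simp only [hRdef]; nlinarith
  have hsEq : S = A + R := by simp only [hRdef]; ring
  have hlkC : (lk:ℂ) ≠ 0 := Complex.ofReal_ne_zero.mpr (ne_of_gt hl)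
  have hSC : (S:ℂ) ≠ 0 := Complex.ofReal_ne_zero.mpr (ne_of_gt hSpos)
  set C : ℂ := 2/((lk:ℂ)^2 * (S:ℂ)) with hCdef
  set F : ℤ → ℝ → ℂ := fun m θ =>
    C * (R:ℂ)^m.natAbs * Complex.exp (Complex.I * ((2*m - n : ℤ):ℂ) * θ) with hFdef
  -- pointwise hasSum
  have habs2 : ∀ θ : ℝ, ((‖(lk : ℂ) * ((σk : ℂ) + Complex.I * (Real.cos θ : ℂ))‖)^2 : ℝ)
      = lk^2 * (σk^2 + Real.cos θ^2) := by
    intro θ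
    rw [Complex.sq_norm, Complex.normSq_mul, Complex.normSq_ofReal]
    simp [Complex.normSq_apply, Complex.cos_ofReal_re]
    ring
  have hF : ∀ θ : ℝ, HasSum (fun m => F m θ)
      (Complex.exp (-Complex.I * (n : ℂ) * (θ : ℂ)) /
        ((‖(lk : ℂ) * ((σk : ℂ) + Complex.I * (Real.cos θ : ℂ))‖ ^ 2 : ℝ) : ℂ)) := by
    intro θ
    have hK := (keySum h1R hsEq habsR hA (2*θ)).mul_left
      (C * Complex.exp (-Complex.I * (n : ℂ) * (θ : ℂ)))
    have hcongr : ∀ m : ℤ, C * Complex.exp (-Complex.I * (n : ℂ) * (θ : ℂ)) *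
        ((R:ℂ)^m.natAbs * Complex.exp (Complex.I * (m:ℂ) * ((2*θ:ℝ):ℂ))) = F m θ := by
      intro m
      simp only [hFdef]
      have e : Complex.exp (-Complex.I * (n:ℂ) * (θ:ℂ)) * Complex.exp (Complex.I * (m:ℂ) * ((2*θ:ℝ):ℂ))
          = Complex.exp (Complex.I * ((2*m - n : ℤ):ℂ) * θ) := by
        rw [← Complex.exp_add]; congr 1; push_cast; ring
      calc C * Complex.exp (-Complex.I * (n:ℂ) * (θ:ℂ)) *
            ((R:ℂ)^m.natAbs * Complex.exp (Complex.I * (m:ℂ) * ((2*θ:ℝ):ℂ)))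
          = C * (R:ℂ)^m.natAbs * (Complex.exp (-Complex.I * (n:ℂ) * (θ:ℂ)) *
              Complex.exp (Complex.I * (m:ℂ) * ((2*θ:ℝ):ℂ))) := by ring
        _ = C * (R:ℂ)^m.natAbs * Complex.exp (Complex.I * ((2*m - n : ℤ):ℂ) * θ) := by rw [e]
    have hval : C * Complex.exp (-Complex.I * (n : ℂ) * (θ : ℂ)) *
        ((S:ℂ) / ((A:ℂ) + (Real.cos (2*θ) : ℂ))) =
        Complex.exp (-Complex.I * (n : ℂ) * (θ : ℂ)) /
          ((‖(lk : ℂ) * ((σk : ℂ) + Complex.I * (Real.cos θ : ℂ))‖ ^ 2 : ℝ) : ℂ) := by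
      rw [habs2 θ]
      have hc2 : Real.cos (2*θ) = 2 * Real.cos θ^2 - 1 := Real.cos_two_mul θ
      have hden : ((A:ℂ) + (Real.cos (2*θ) : ℂ)) = 2 * ((σk:ℝ)^2 + Real.cos θ^2 : ℝ) := by
        rw [hc2]; push_cast [hAdef]; ring
      have hpos : (0:ℝ) < σk^2 + Real.cos θ^2 := by positivity
      have hne : ((σk^2 + Real.cos θ^2 : ℝ):ℂ) ≠ 0 := Complex.ofReal_ne_zero.mpr (ne_of_gt hpos)
      rw [hden, hCdef]
      have hne' : ((σk:ℂ)^2 + Complex.cos (θ:ℂ)^2) ≠ 0 := by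
        intro h; apply hne; push_cast; exact h
      push_cast
      field_simp
    rw [← hval]
    exact hK.congr_fun (fun m => (hcongr m).symm)
  -- integrability and norms
  have hFint : ∀ m : ℤ, MeasureTheory.IntegrableOn (F m) (Set.Ioc (0:ℝ) (2*π)) := by
    intro m
    apply Continuous.integrableOn_Ioc
    simp only [hFdef]
    continuity
  have hnorm : ∀ (m : ℤ) (θ : ℝ), ‖F m θ‖ = (‖C‖ * |R|^m.natAbs) := by
    intro m θ
    have h2 : F m θ = C * (R:ℂ)^m.natAbs * Complex.exp (((((2*m - n:ℤ):ℝ)*θ :ℝ):ℂ) * Complex.I) := by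
      simp only [hFdef]
      congr 2
      push_cast; ring
    rw [h2]
    simp only [norm_mul, norm_pow, Complex.norm_real, Real.norm_eq_abs,
      Complex.norm_exp_ofReal_mul_I, mul_one]
  have hnormint : ∀ m : ℤ, ∫ θ in Set.Ioc (0:ℝ) (2*π), ‖F m θ‖ =
      (‖C‖ * |R|^m.natAbs) * (2*π) := by
    intro m
    rw [show (fun θ => ‖F m θ‖) = fun _ : ℝ => (‖C‖ * |R|^m.natAbs) from funext (hnorm m)]
    rw [MeasureTheory.setIntegral_const, MeasureTheory.measureReal_def, Real.volume_Ioc, smul_eq_mul]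
    rw [ENNReal.toReal_ofReal (by rw [sub_zero]; positivity)]
    ring
  have hsumnorm : Summable (fun m : ℤ => ∫ θ in Set.Ioc (0:ℝ) (2*π), ‖F m θ‖) := by
    rw [show (fun m : ℤ => ∫ θ in Set.Ioc (0:ℝ) (2*π), ‖F m θ‖)
        = fun m : ℤ => (‖C‖ * |R|^m.natAbs) * (2*π) from funext hnormint]
    apply Summable.mul_right
    apply Summable.mul_left
    have hgeo : Summable (fun k : ℕ => |R|^k) :=
      summable_geometric_of_lt_one (abs_nonneg R) habsR
    apply Summable.of_nat_of_neg_add_one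
    · simpa using hgeo
    · refine (hgeo.mul_left |R|).congr fun j => ?_
      have hj : (-((j:ℤ) + 1)).natAbs = j+1 := by omega
      rw [hj, pow_succ]
      ring
  have hIoc : ∀ (f : ℝ → ℂ), (∫ θ in (0:ℝ)..(2*π), f θ) = ∫ θ in Set.Ioc (0:ℝ) (2*π), f θ :=
    fun f => intervalIntegral.integral_of_le (by positivity)
  have hswap := MeasureTheory.integral_tsum_of_summable_integral_norm hFint hsumnorm
  have hFm : ∀ m : ℤ, (∫ θ in Set.Ioc (0:ℝ) (2*π), F m θ)
      = C * (R:ℂ)^m.natAbs * (if 2*m - n = 0 then ((2*π:ℝ):ℂ) else 0) := by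
    intro m
    rw [← hIoc (F m)]
    simp only [hFdef]
    rw [intervalIntegral.integral_const_mul, fourierInt (2*m - n)]
  have hItotal : (∫ θ in (0:ℝ)..(2*π),
      Complex.exp (-Complex.I * (n : ℂ) * (θ : ℂ)) /
        ((‖(lk : ℂ) * ((σk : ℂ) + Complex.I * (Real.cos θ : ℂ))‖ ^ 2 : ℝ) : ℂ))
      = ∑' m : ℤ, (C * (R:ℂ)^m.natAbs * (if 2*m - n = 0 then ((2*π:ℝ):ℂ) else 0)) := by
    rw [hIoc]
    have h1 : (∫ θ in Set.Ioc (0:ℝ) (2*π),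
        Complex.exp (-Complex.I * (n : ℂ) * (θ : ℂ)) /
          ((‖(lk : ℂ) * ((σk : ℂ) + Complex.I * (Real.cos θ : ℂ))‖ ^ 2 : ℝ) : ℂ))
        = ∫ θ in Set.Ioc (0:ℝ) (2*π), ∑' m : ℤ, F m θ := by
      apply MeasureTheory.integral_congr_ae
      filter_upwards with θ using (hF θ).tsum_eq.symm
    rw [h1, ← hswap]
    exact tsum_congr hFm
  constructor
  · intro hodd
    have hzero : ∀ m : ℤ, 2*m - n ≠ 0 := by
      intro m h
      exact (Int.not_odd_iff_even.mpr ⟨m, by omega⟩) hodd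
    rw [hItotal]
    simp [hzero]
  · intro heven
    obtain ⟨m₀, hm₀⟩ := heven
    rw [hItotal]
    have hts : (∑' m : ℤ, (C * (R:ℂ)^m.natAbs * (if 2*m - n = 0 then ((2*π:ℝ):ℂ) else 0)))
        = C * (R:ℂ)^m₀.natAbs * ((2*π:ℝ):ℂ) := by
      rw [tsum_eq_single m₀ ?_]
      · rw [if_pos (by omega)]
      · intro m hm
        rw [if_neg (by omega), mul_zero]
    rw [hts]
    have hk : n.natAbs / 2 = m₀.natAbs := by omega
    have hdiv : n / 2 = m₀ := by omega
    rw [hk, hdiv]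
    have hsign : ((-1:ℝ))^(m₀) = ((-1:ℝ))^(m₀.natAbs) := by
      rcases Int.natAbs_eq m₀ with h | h
      · conv_lhs => rw [h]
        rw [zpow_natCast]
      · conv_lhs => rw [h]
        rw [zpow_neg, zpow_natCast]
        rcases Nat.even_or_odd m₀.natAbs with he | ho
        · rw [he.neg_one_pow]; norm_num
        · rw [ho.neg_one_pow]; norm_num
    have hRpow : R ^ m₀.natAbs = (-1:ℝ)^(m₀.natAbs) * (A - S)^(m₀.natAbs) := by
      rw [show R = -(A - S) by rw [hRdef]; ring, neg_pow]
    have hreal : (S⁻¹ / lk^2) * (2*((-1:ℝ))^(m₀)) * (A - S)^(m₀.natAbs)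
        = (2/(lk^2*S)) * R^(m₀.natAbs) := by
      rw [hsign, hRpow]
      field_simp
    rw [show (((S⁻¹ / lk^2) * (2*((-1:ℝ))^(m₀)) * ((A - S)^(m₀.natAbs)) : ℝ) : ℂ)
        = (((2/(lk^2*S)) * R^(m₀.natAbs) : ℝ) : ℂ) from congrArg _ hreal]
    have h2πC : ((2*π:ℝ):ℂ) ≠ 0 := Complex.ofReal_ne_zero.mpr (by positivity)
    have hstep : ((1/(2*π):ℝ):ℂ) * (C * (R:ℂ)^(m₀.natAbs) * ((2*π:ℝ):ℂ))
        = C * (R:ℂ)^(m₀.natAbs) * (((2*π:ℝ):ℂ) * ((2*π:ℝ):ℂ)⁻¹) := by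
      push_cast; ring
    rw [hstep, mul_inv_cancel₀ h2πC, mul_one, hCdef]
    push_cast
    ring
end

section
/- Let k ≥ 1, σ_k > 0, τ_k ∈ ℝ, λ_k > 0 and E > 0. Define the inviscid integral J(σ_k, τ_k) = (4π²k e_k/(E λ_k))·(1 - |z_in| + 2σ_k|z_in|τ_k), where z_in = -(2σ_k²+1)+√((2σ_k²+1)²-1) and e_k = ((2σ_k²+1)²-1)^{-1/2}. Then for τ_k ≥ 0 fixed, the map σ_k ↦ J(σ_k, 0) (i.e. with τ_k = 0) is positive and strictly decreasing in σ_k on (0,∞), and J(σ_k, 0) → 0 as σ_k → ∞. -/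
open Real Filter

/-- The inviscid integral J(σ_k, τ_k) = (4π²k e_k/(E λ_k))(1 - |z_in| + 2σ_k|z_in|τ_k):
    for τ_k = 0 it is positive, strictly decreasing in σ_k on (0,∞), and tends to 0
    as σ_k → ∞. -/
theorem stmt15 (k : ℕ) (hk : 1 ≤ k) (E lk : ℝ) (hE : 0 < E) (hl : 0 < lk)
    (J : ℝ → ℝ → ℝ)
    (hJ : ∀ σ τ, J σ τ =
      (4*π^2*(k : ℝ)*(Real.sqrt ((2*σ^2 + 1)^2 - 1))⁻¹/(E*lk)) *
        (1 - ((2*σ^2 + 1) - Real.sqrt ((2*σ^2 + 1)^2 - 1))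
          + 2*σ*((2*σ^2 + 1) - Real.sqrt ((2*σ^2 + 1)^2 - 1))*τ)) :
    (∀ σ : ℝ, 0 < σ → 0 < J σ 0) ∧
    StrictAntiOn (fun σ => J σ 0) (Set.Ioi 0) ∧
    Tendsto (fun σ => J σ 0) atTop (nhds 0) := by
  have hkpos : (0:ℝ) < (k:ℝ) := by exact_mod_cast hk
  set C : ℝ := 4*π^2*(k:ℝ)/(E*lk) with hC
  have hCpos : 0 < C := by
    apply div_pos
    · positivity
    · positivity
  have key : ∀ σ : ℝ, 0 < σ → J σ 0 = C * (1 - σ / Real.sqrt (σ^2+1)) := by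
    intro σ hσ
    have hs1 : (0:ℝ) < Real.sqrt (σ^2+1) := Real.sqrt_pos.2 (by positivity)
    have hs2 : Real.sqrt (σ^2+1) ^ 2 = σ^2+1 := Real.sq_sqrt (by positivity)
    have hs : Real.sqrt ((2*σ^2+1)^2 - 1) = 2*σ*Real.sqrt (σ^2+1) := by
      rw [show (2*σ^2+1)^2 - 1 = (2*σ)^2*(σ^2+1) by ring,
        Real.sqrt_mul (sq_nonneg _), Real.sqrt_sq (by linarith)]
    rw [hJ, hs, hC]
    field_simp
    ring_nf
  have hfrac : ∀ σ : ℝ, 0 < σ → σ / Real.sqrt (σ^2+1) < 1 := by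
    intro σ hσ
    have hs1 : (0:ℝ) < Real.sqrt (σ^2+1) := Real.sqrt_pos.2 (by positivity)
    have hs2 : Real.sqrt (σ^2+1) ^ 2 = σ^2+1 := Real.sq_sqrt (by positivity)
    rw [div_lt_one hs1]
    nlinarith [hs1, hs2]
  refine ⟨?_, ?_, ?_⟩
  · intro σ hσ
    rw [key σ hσ]
    have := hfrac σ hσ
    have h0 : 0 ≤ σ / Real.sqrt (σ^2+1) := by positivity
    nlinarith
  · intro x hx y hy hxy
    simp only [Set.mem_Ioi] at hx hy
    show J y 0 < J x 0
    rw [key x hx, key y hy]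
    have hsx1 : (0:ℝ) < Real.sqrt (x^2+1) := Real.sqrt_pos.2 (by positivity)
    have hsx2 : Real.sqrt (x^2+1) ^ 2 = x^2+1 := Real.sq_sqrt (by positivity)
    have hsy1 : (0:ℝ) < Real.sqrt (y^2+1) := Real.sqrt_pos.2 (by positivity)
    have hsy2 : Real.sqrt (y^2+1) ^ 2 = y^2+1 := Real.sq_sqrt (by positivity)
    have hlt : x / Real.sqrt (x^2+1) < y / Real.sqrt (y^2+1) := by
      rw [div_lt_div_iff₀ hsx1 hsy1]
      nlinarith [mul_pos hx hsy1, mul_pos hy hsx1, hsx2, hsy2,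
        mul_pos (mul_pos hx hsy1) (mul_pos hy hsx1)]
    have : 1 - y / Real.sqrt (y^2+1) < 1 - x / Real.sqrt (x^2+1) := by linarith
    exact mul_lt_mul_of_pos_left this hCpos
  · have hb : Tendsto (fun σ : ℝ => C / σ) atTop (nhds 0) :=
      Tendsto.div_atTop tendsto_const_nhds tendsto_id
    apply tendsto_of_tendsto_of_tendsto_of_le_of_le' tendsto_const_nhds hb
    · filter_upwards [eventually_ge_atTop (1:ℝ)] with σ hσ1
      have hσ : 0 < σ := by linarith
      rw [key σ hσ]
      have := hfrac σ hσ
      have h0 : 0 ≤ σ / Real.sqrt (σ^2+1) := by positivity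
      nlinarith
    · filter_upwards [eventually_ge_atTop (1:ℝ)] with σ hσ1
      have hσ : 0 < σ := by linarith
      rw [key σ hσ]
      set s := Real.sqrt (σ^2+1) with hsdef
      have hs1 : (0:ℝ) < s := Real.sqrt_pos.2 (by positivity)
      have hs2 : s ^ 2 = σ^2+1 := Real.sq_sqrt (by positivity)
      have hσs : σ ≤ s := by nlinarith
      have hsge1 : 1 ≤ s := by nlinarith
      have hub : 1 - σ / s ≤ 1 / σ := by
        have h1 : 1 - σ / s = (s - σ)/s := by field_simp
        rw [h1, div_le_div_iff₀ hs1 hσ]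
        nlinarith
      calc C * (1 - σ / s) ≤ C * (1/σ) := by
            exact mul_le_mul_of_nonneg_left hub hCpos.le
        _ = C / σ := by ring
end
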